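/- Let d_1 | d_2 | ... | d_l be a divisible chain with d_1 = 1 and d_{h+1} ≥ 2 d_h for each h. Given nonnegative integers F_1,...,F_l with d_h | F_h, and a nonincreasing construction of sets via sizes: define v^h recursively by v^h = min{ ⌊ S_h / d_h ⌋ d_h, F_h } where S_1 is a given total size and S_{h+1} = S_h − v^h + A_{h+1} for given nonnegative A_{h+1} divisible by d_{h+1}. Then for every h, any quantity A satisfying the 'maximum-greedy' recursion A'_1 = S_1, A'_{h+1} = A'_h − min{F_h, A'_h} + A_{h+1} satisfies ⌊A'_h / d_h⌋ d_h = ⌊S_h / d_h⌋ d_h for all h (the floors to the nearest multiple of d_h of the min-assignment and max-assignment residuals coincide). -/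
import Mathlib


open Finset

lemma key_floor_shift (D e B r : ℕ) (hD : 0 < D) (heD : e ∣ D) (heB : e ∣ B)
    (hr : r < e) : (B + r) / D = B / D := by
  have hs : e ∣ B % D := (Nat.dvd_mod_iff heD).mpr heB
  have hsD : B % D < D := Nat.mod_lt _ hD
  have h2 : e ≤ D - B % D := Nat.le_of_dvd (by omega) (Nat.dvd_sub heD hs)
  have h1 : B % D + r < D := by omega
  have hB := Nat.div_add_mod B D
  rw [show B + r = D * (B / D) + (B % D + r) by omega,
      Nat.mul_add_div hD, Nat.div_eq_of_lt h1, Nat.add_zero]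

/-- Floors of the min-assignment residual `S` and of the max-assignment residual `A'`
coincide: with a divisible chain `d` (`d 1 = 1`, `2 * d h ≤ d (h+1)`), capacities
`F h` multiples of `d h`, arrivals `A (h+1)` multiples of `d (h+1)`, the recursions
`S (h+1) = S h - min (⌊S h / d h⌋ d h) (F h) + A (h+1)` and
`A' (h+1) = A' h - min (F h) (A' h) + A (h+1)` with `A' 1 = S 1` satisfy
`⌊A' h / d h⌋ d h = ⌊S h / d h⌋ d h` for all `h`. -/
theorem min_max_residual_floors_coincide
    (l : ℕ) (d F A S A' : ℕ → ℕ)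
    (hd1 : d 1 = 1)
    (hdpos : ∀ h ∈ Icc 1 l, 0 < d h)
    (hchain : ∀ h, 1 ≤ h → h < l → d h ∣ d (h + 1) ∧ 2 * d h ≤ d (h + 1))
    (hF : ∀ h ∈ Icc 1 l, d h ∣ F h)
    (hA : ∀ h, 1 < h → h ≤ l → d h ∣ A h)
    (hS : ∀ h, 1 ≤ h → h < l →
      S (h + 1) = S h - min (S h / d h * d h) (F h) + A (h + 1))
    (hA'1 : A' 1 = S 1)
    (hA' : ∀ h, 1 ≤ h → h < l →
      A' (h + 1) = A' h - min (F h) (A' h) + A (h + 1)) :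
    ∀ h ∈ Icc 1 l, A' h / d h * d h = S h / d h * d h := by
  intro h hmem
  rw [mem_Icc] at hmem
  obtain ⟨h1, h2⟩ := hmem
  induction h, h1 using Nat.le_induction with
  | base => simp [hd1, hA'1]
  | succ h h1 ih =>
    have hl : h < l := h2
    have ihh := ih (le_of_lt hl)
    obtain ⟨hdvd, h2d⟩ := hchain h h1 hl
    have hdh : 0 < d h := hdpos h (mem_Icc.mpr ⟨h1, le_of_lt hl⟩)
    have hD : 0 < d (h + 1) := by omega
    have hFdvd : d h ∣ F h := hF h (mem_Icc.mpr ⟨h1, le_of_lt hl⟩)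
    have hAdvd : d h ∣ A (h + 1) := dvd_trans hdvd (hA (h + 1) (by omega) (by omega))
    set q := S h / d h with hq
    have hSh : q * d h + S h % d h = S h := Nat.div_add_mod' (S h) (d h)
    have hrS : S h % d h < d h := Nat.mod_lt _ hdh
    have hq' : A' h / d h = q := Nat.eq_of_mul_eq_mul_right hdh ihh
    have hAh : q * d h + A' h % d h = A' h := by
      rw [← hq']; exact Nat.div_add_mod' (A' h) (d h)
    have hrA : A' h % d h < d h := Nat.mod_lt _ hdh
    have eS := hS h h1 hl
    have eA := hA' h h1 hl
    rcases le_or_gt (F h) (q * d h) with hc | hc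
    · -- F h ≤ q * d h : both remove F h
      have hFA' : F h ≤ A' h := le_trans hc (by omega)
      rw [min_eq_right hc] at eS
      rw [min_eq_left hFA'] at eA
      have hdqd : d h ∣ q * d h := dvd_mul_left (d h) q
      have hdB : d h ∣ q * d h - F h + A (h + 1) :=
        Nat.dvd_add (Nat.dvd_sub hdqd hFdvd) hAdvd
      have eS' : S (h + 1) = (q * d h - F h + A (h + 1)) + S h % d h := by omega
      have eA' : A' (h + 1) = (q * d h - F h + A (h + 1)) + A' h % d h := by omega
      rw [eS', eA', key_floor_shift _ (d h) _ _ hD hdvd hdB hrS,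
        key_floor_shift _ (d h) _ _ hD hdvd hdB hrA]
    · -- q * d h < F h : S removes q * d h, A' removes everything
      have hdF : d h ∣ F h - q * d h := Nat.dvd_sub hFdvd (dvd_mul_left (d h) q)
      have hge : d h ≤ F h - q * d h := Nat.le_of_dvd (by omega) hdF
      have hA'F : A' h ≤ F h := by omega
      rw [min_eq_left (le_refl (q * d h) |>.trans (le_of_lt hc) |> le_of_lt ∘ fun _ => hc)] at eS
      rw [min_eq_right hA'F] at eA
      have eS' : S (h + 1) = A (h + 1) + S h % d h := by omega
      have eA' : A' (h + 1) = A (h + 1) + 0 := by omega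
      rw [eS', eA', key_floor_shift _ (d h) _ _ hD hdvd hAdvd hrS,
        key_floor_shift _ (d h) _ _ hD hdvd hAdvd hdh]
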